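/- Let α ∈ ℛ₊ and f ∈ ℤ[L]. For every integer m ≥ 1 the following three conditions are equivalent: (i) f − s_α(f) is divisible by (1 − e^α)·(1 − e^{ᾱ})^{m−1} in ℤ[L]; (ii) f − s_α(f) is divisible by (1 − e^{ᾱ})^m in ℤ[L]; (iii) Λ_α(f) is divisible by (1 − e^{ᾱ})^{2⌊m/2⌋} in ℤ[L]. -/

import Mathlib

/-!
STATEMENT 11.  Let α ∈ ℛ₊ and f ∈ ℤ[L].  For every integer m ≥ 1 the following three
conditions are equivalent:
(i)   f − s_α(f) is divisible by (1 − e^α)·(1 − e^{ᾱ})^{m−1} in ℤ[L];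
(ii)  f − s_α(f) is divisible by (1 − e^{ᾱ})^m in ℤ[L];
(iii) Λ_α(f) is divisible by (1 − e^{ᾱ})^{2⌊m/2⌋} in ℤ[L].
Here Λ_α(f) is the unique element with (1 − e^α)·Λ_α(f) = f − s_α(f), and ᾱ = α/2 if
α ∈ 2L and ᾱ = α otherwise (encoded by the data `rbar` and the hypothesis `hrbar`).
-/

namespace Statement11

/-- basis element `e^λ` of the group ring ℤ[L]. -/
noncomputable def Ee {L : Type*} [AddCommGroup L] (l : L) : AddMonoidAlgebra ℤ L :=
  AddMonoidAlgebra.single l 1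
section A
variable {L : Type*} [AddCommGroup L]
lemma Ee_mul (a b : L) : Ee a * Ee b = Ee (a + b) := by
  simp [Ee, AddMonoidAlgebra.single_mul_single]
lemma Ee_zero : Ee (0 : L) = 1 := (AddMonoidAlgebra.one_def).symm
lemma Ee_pow (n : ℕ) (a : L) : Ee a ^ n = Ee (n • a) := by
  induction n with
  | zero => simp [Ee_zero]
  | succ k ih => rw [pow_succ, ih, Ee_mul, succ_nsmul]
lemma two_eq : (2 : AddMonoidAlgebra ℤ L) = AddMonoidAlgebra.single 0 2 := by
  rw [← one_add_one_eq_two, AddMonoidAlgebra.one_def, ← AddMonoidAlgebra.single_add]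
  norm_num
lemma two_mul_apply (x : AddMonoidAlgebra ℤ L) (b : L) : (2 * x).coeff b = 2 * x.coeff b := by
  rw [two_eq, AddMonoidAlgebra.coeff_single_zero_mul]
lemma one_sub_Ee_ne_zero {c : L} (hc : c ≠ 0) : (1 : AddMonoidAlgebra ℤ L) - Ee c ≠ 0 := by
  intro h
  have h0 : ((1 : AddMonoidAlgebra ℤ L) - Ee c).coeff 0 = 0 := by rw [h]; rfl
  rw [AddMonoidAlgebra.coeff_sub, Finsupp.sub_apply, AddMonoidAlgebra.one_def, AddMonoidAlgebra.coeff_single, Finsupp.single_eq_same, Ee,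
    AddMonoidAlgebra.coeff_single, Finsupp.single_eq_of_ne' hc] at h0
  norm_num at h0
lemma one_add_Ee_ne_zero {c : L} (hc : c ≠ 0) : (1 : AddMonoidAlgebra ℤ L) + Ee c ≠ 0 := by
  intro h
  have h0 : ((1 : AddMonoidAlgebra ℤ L) + Ee c).coeff 0 = 0 := by rw [h]; rfl
  rw [AddMonoidAlgebra.coeff_add, Finsupp.add_apply, AddMonoidAlgebra.one_def, AddMonoidAlgebra.coeff_single, Finsupp.single_eq_same, Ee,
    AddMonoidAlgebra.coeff_single, Finsupp.single_eq_of_ne' hc] at h0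
  norm_num at h0
lemma dvd_of_two_dvd [Module.Free ℤ L] {c : L} (hc : c ≠ 0) {x : AddMonoidAlgebra ℤ L}
    (hx : (1 - Ee c) ∣ 2 * x) : (1 - Ee c) ∣ x := by
  obtain ⟨h, hh⟩ := hx
  have key : ∀ b : L, h.coeff b - h.coeff (b - c) = 2 * x.coeff b := by
    intro b
    have e0 := congrArg (fun z : AddMonoidAlgebra ℤ L => z.coeff b) hh
    simp only [two_mul_apply] at e0
    have e1 : ((1 - Ee c) * h).coeff b = h.coeff b - h.coeff (b - c) := by
      rw [sub_mul, one_mul, AddMonoidAlgebra.coeff_sub, Finsupp.sub_apply, Ee, AddMonoidAlgebra.coeff_single_mul_apply,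
        one_mul, neg_add_eq_sub]
    rw [e1] at e0
    exact e0.symm
  have hstep : ∀ b : L, (2 : ℤ) ∣ h.coeff b - h.coeff (b - c) := fun b => ⟨x.coeff b, key b⟩
  have hchain : ∀ (b : L) (n : ℕ), (2 : ℤ) ∣ h.coeff b - h.coeff (b - n • c) := by
    intro b n
    induction n with
    | zero => simp
    | succ k ih =>
      have h2 := hstep (b - k • c)
      have e2 : b - k • c - c = b - (k + 1) • c := by rw [succ_nsmul]; abel
      rw [e2] at h2
      have := dvd_add ih h2
      rwa [sub_add_sub_cancel] at this
  have hcoef : ∀ b : L, (2 : ℤ) ∣ h.coeff b := by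
    intro b
    have hinj : Function.Injective (fun n : ℕ => b - n • c) := by
      intro n m hnm
      simp only [sub_right_injective.eq_iff] at hnm
      have h3 : (n : ℤ) • c = (m : ℤ) • c := by rw [natCast_zsmul, natCast_zsmul, hnm]
      exact_mod_cast smul_left_injective ℤ hc h3
    obtain ⟨a, ⟨n, rfl⟩, ha⟩ :=
      (Set.infinite_range_of_injective hinj).exists_notMem_finset h.coeff.support
    have h0 : h.coeff (b - n • c) = 0 := Finsupp.notMem_support_iff.mp ha
    have h4 := hchain b n
    rwa [h0, sub_zero] at h4
  set h₂ : AddMonoidAlgebra ℤ L := AddMonoidAlgebra.ofCoeff (Finsupp.mapRange (fun z => z / 2) (by norm_num) h.coeff) with hh2def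
  have hh2 : h = 2 * h₂ := by
    apply AddMonoidAlgebra.ext
    apply Finsupp.ext
    intro b
    rw [two_mul_apply, hh2def, AddMonoidAlgebra.coeff_ofCoeff, Finsupp.mapRange_apply, Int.mul_ediv_cancel' (hcoef b)]
  refine ⟨h₂, ?_⟩
  apply AddMonoidAlgebra.ext
  apply Finsupp.ext
  intro b
  have h5 : 2 * x = 2 * ((1 - Ee c) * h₂) := by rw [hh, hh2]; ring
  have := congrArg (fun z : AddMonoidAlgebra ℤ L => z.coeff b) h5
  simp only [two_mul_apply] at this
  omega
end A

theorem statement_11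
    {L : Type*} [AddCommGroup L] [Module.Free ℤ L] [Module.Finite ℤ L]
    [IsDomain (AddMonoidAlgebra ℤ L)]
    {W : Type*} [Group W] [Fintype W] [DistribMulAction W L]
    [MulSemiringAction W (AddMonoidAlgebra ℤ L)]
    (hcomp : ∀ (w : W) (l : L), w • (Ee l) = Ee (w • l))
    {Rp : Type*} [Fintype Rp]
    (r : Rp → L) (cor : Rp → (L →+ ℤ)) (sr : Rp → W)
    (hcor : ∀ α, cor α (r α) = 2)
    (hrefl : ∀ (α) (l : L), sr α • l = l - cor α l • r α)
    (hs2 : ∀ α, sr α * sr α = 1)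
    (hred : ∀ α β, r α ≠ 2 • r β ∧ r α ≠ -(2 • r β))
    (rbar : Rp → L)
    (hrbar : ∀ α, r α = 2 • rbar α ∨ (rbar α = r α ∧ ∀ l : L, r α ≠ 2 • l))
    (Lam : Rp → AddMonoidAlgebra ℤ L → AddMonoidAlgebra ℤ L)
    (hLam : ∀ α f, (1 - Ee (r α)) * Lam α f = f - sr α • f)
    (α : Rp) (f : AddMonoidAlgebra ℤ L) (m : ℕ) (hm : 1 ≤ m) :
    (((1 - Ee (r α)) * (1 - Ee (rbar α)) ^ (m - 1) ∣ f - sr α • f) ↔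
      ((1 - Ee (rbar α)) ^ m ∣ f - sr α • f)) ∧
    (((1 - Ee (rbar α)) ^ m ∣ f - sr α • f) ↔
      ((1 - Ee (rbar α)) ^ (2 * (m / 2)) ∣ Lam α f)) := by
  classical
  have hs : ∀ x : AddMonoidAlgebra ℤ L, sr α • sr α • x = x := by
    intro x; rw [← mul_smul, hs2, one_smul]
  have hrα0 : r α ≠ 0 := by
    intro h
    have h2 := hcor α
    rw [h, map_zero] at h2
    norm_num at h2
  set c := rbar α with hc_def
  have hcase := hrbar α
  have hc0 : c ≠ 0 := by
    rcases hcase with h | h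
    · intro h0
      rw [hc_def] at h0
      rw [h0, smul_zero] at h
      exact hrα0 h
    · rw [hc_def, h.1]; exact hrα0
  obtain ⟨t, htEe⟩ : ∃ t : ℕ, Ee (r α) = Ee c ^ t := by
    rcases hcase with h | h
    · exact ⟨2, by rw [Ee_pow, ← h]⟩
    · exact ⟨1, by rw [pow_one, hc_def, h.1]⟩
  obtain ⟨q, hpq, hq_cases⟩ :
      ∃ q, 1 - Ee (r α) = (1 - Ee c) * q ∧ (q = 1 ∨ q = 1 + Ee c) := by
    rcases hcase with h | h
    · refine ⟨1 + Ee c, ?_, Or.inr rfl⟩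
      have h1 : Ee (r α) = Ee c * Ee c := by rw [Ee_mul, h, two_nsmul]
      rw [h1]; ring
    · exact ⟨1, by rw [mul_one, hc_def, h.1], Or.inl rfl⟩
  set p : AddMonoidAlgebra ℤ L := 1 - Ee c with hp_def
  have hp0 : p ≠ 0 := one_sub_Ee_ne_zero hc0
  have hq0 : q ≠ 0 := by
    rcases hq_cases with h | h
    · rw [h]; exact one_ne_zero
    · rw [h]; exact one_add_Ee_ne_zero hc0
  have hprα0 : (1 : AddMonoidAlgebra ℤ L) - Ee (r α) ≠ 0 := one_sub_Ee_ne_zero hrα0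
  have hsEe : ∀ l : L, sr α • (Ee l : AddMonoidAlgebra ℤ L) = Ee (sr α • l) := hcomp (sr α)
  have hsrα : sr α • (r α) = -(r α) := by
    rw [hrefl, hcor, two_zsmul]; abel
  have hsc : sr α • c = -c := by
    rcases hcase with h | h
    · have hcorc : cor α c = 1 := by
        have h2 := hcor α
        rw [h, map_nsmul, nsmul_eq_mul] at h2
        push_cast at h2
        linarith
      rw [hrefl, hcorc, one_smul, h, two_nsmul]
      abel
    · rw [hc_def, h.1]; exact hsrα
  have hEerinv : Ee (r α) * Ee (-(r α)) = 1 := by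
    rw [Ee_mul, add_neg_cancel, Ee_zero]
  have hΛ := hLam α f
  -- the symmetry sΛ = e^{r α} Λ
  have hsΛ : sr α • Lam α f = Ee (r α) * Lam α f := by
    have hspα : sr α • ((1 : AddMonoidAlgebra ℤ L) - Ee (r α)) = 1 - Ee (-(r α)) := by
      rw [smul_sub, smul_one, hsEe, hsrα]
    have h2 : (1 - Ee (-(r α))) * (sr α • Lam α f) =
        -(((1 : AddMonoidAlgebra ℤ L) - Ee (r α)) * Lam α f) := by
      rw [← hspα, ← smul_mul', hΛ, smul_sub, hs, neg_sub]
    have h3 : (1 : AddMonoidAlgebra ℤ L) - Ee (-(r α)) = (1 - Ee (r α)) * (-Ee (-(r α))) := by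
      have h4 : ((1 : AddMonoidAlgebra ℤ L) - Ee (r α)) * (-Ee (-(r α))) =
          -Ee (-(r α)) + Ee (r α) * Ee (-(r α)) := by ring
      rw [h4, hEerinv]
      abel
    rw [h3, mul_assoc] at h2
    have h5 : ((1 : AddMonoidAlgebra ℤ L) - Ee (r α)) * (-Ee (-(r α)) * (sr α • Lam α f)) =
        (1 - Ee (r α)) * (-(Lam α f)) := by rw [h2]; ring
    have h6 := mul_left_cancel₀ hprα0 h5
    have h7 : Ee (-(r α)) * (sr α • Lam α f) = Lam α f := by
      have := neg_injective (by rw [← h6]; ring :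
        -(Ee (-(r α)) * (sr α • Lam α f)) = -(Lam α f))
      exact this
    calc sr α • Lam α f = (Ee (r α) * Ee (-(r α))) * (sr α • Lam α f) := by
          rw [hEerinv, one_mul]
      _ = Ee (r α) * Lam α f := by rw [mul_assoc, h7]
  have hdvd_sub : ∀ x : AddMonoidAlgebra ℤ L, p ∣ x - sr α • x := by
    intro x
    exact dvd_trans (Dvd.intro q hpq.symm) ⟨Lam α x, (hLam α x).symm⟩
  -- cancellation of (1 + Ee c)
  have hqcancel : ∀ (k : ℕ) (x : AddMonoidAlgebra ℤ L), p ^ k ∣ (1 + Ee c) * x → p ^ k ∣ x := by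
    intro k
    induction k with
    | zero => intro x _; simp
    | succ k ih =>
      intro x hx
      have hp1 : p ∣ (1 + Ee c) * x := dvd_trans (dvd_pow_self p (Nat.succ_ne_zero k)) hx
      have hp2 : p ∣ 2 * x := by
        have e : 2 * x = (1 + Ee c) * x + p * x := by rw [hp_def]; ring
        rw [e]; exact dvd_add hp1 (dvd_mul_right p x)
      obtain ⟨y, hy⟩ := dvd_of_two_dvd hc0 hp2
      rw [hy, show (1 + Ee c) * (p * y) = p * ((1 + Ee c) * y) by ring,
        show p ^ (k + 1) = p * p ^ k by rw [pow_succ, mul_comm]] at hx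
      have := ih y ((mul_dvd_mul_iff_left hp0).mp hx)
      rw [hy, show p ^ (k + 1) = p * p ^ k by rw [pow_succ, mul_comm]]
      exact mul_dvd_mul_left p this
  -- parity boost
  have hparity : ∀ k : ℕ, Odd k → p ^ k ∣ Lam α f → p ^ (k + 1) ∣ Lam α f := by
    rintro k hk ⟨g, hg⟩
    have hEecinv : Ee c * Ee (-c) = 1 := by rw [Ee_mul, add_neg_cancel, Ee_zero]
    have hsp : sr α • p = -Ee (-c) * p := by
      rw [hp_def, smul_sub, smul_one, hsEe, hsc]
      have h4 : -Ee (-c) * ((1 : AddMonoidAlgebra ℤ L) - Ee c) =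
          -Ee (-c) + Ee c * Ee (-c) := by ring
      rw [h4, hEecinv]
      abel
    have hsΛ2 : sr α • Lam α f = (-Ee (-c)) ^ k * p ^ k * (sr α • g) := by
      rw [hg, smul_mul', smul_pow', hsp, mul_pow]
    have heq : Ee c ^ t * (p ^ k * g) = (-Ee (-c)) ^ k * p ^ k * (sr α • g) := by
      rw [← htEe, ← hg, ← hsΛ, hsΛ2]
    have hpk0 : p ^ k ≠ 0 := pow_ne_zero _ hp0
    have hneg : (-Ee (-c) : AddMonoidAlgebra ℤ L) ^ k = -((Ee (-c)) ^ k) := Odd.neg_pow hk _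
    have heq2 : Ee c ^ t * g = -(Ee (-c) ^ k * (sr α • g)) := by
      apply mul_left_cancel₀ hpk0
      calc p ^ k * (Ee c ^ t * g) = Ee c ^ t * (p ^ k * g) := by ring
        _ = (-Ee (-c)) ^ k * p ^ k * (sr α • g) := heq
        _ = p ^ k * -(Ee (-c) ^ k * (sr α • g)) := by rw [hneg]; ring
    have hinv : (Ee c : AddMonoidAlgebra ℤ L) ^ k * Ee (-c) ^ k = 1 := by
      rw [← mul_pow, hEecinv, one_pow]
    have hsg : sr α • g = -(Ee c ^ (k + t) * g) := by
      have hX : Ee (-c) ^ k * (sr α • g) = -(Ee c ^ t * g) := by rw [heq2, neg_neg]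
      calc sr α • g = (Ee c ^ k * Ee (-c) ^ k) * (sr α • g) := by rw [hinv, one_mul]
        _ = Ee c ^ k * (Ee (-c) ^ k * (sr α • g)) := by ring
        _ = Ee c ^ k * -(Ee c ^ t * g) := by rw [hX]
        _ = -(Ee c ^ (k + t) * g) := by rw [pow_add]; ring
    have hdvd1 : p ∣ 2 * g := by
      have d1 : p ∣ g - sr α • g := hdvd_sub g
      have d2 : p ∣ (1 - Ee c ^ (k + t)) * g := by
        have := sub_dvd_pow_sub_pow (1 : AddMonoidAlgebra ℤ L) (Ee c) (k + t)
        rw [one_pow] at this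
        exact Dvd.dvd.mul_right this g
      have e : 2 * g = (g - sr α • g) + (1 - Ee c ^ (k + t)) * g := by rw [hsg]; ring
      rw [e]; exact dvd_add d1 d2
    obtain ⟨g', hg'⟩ := dvd_of_two_dvd hc0 hdvd1
    exact ⟨g', by rw [hg, hg', pow_succ]; ring⟩
  -- assembly
  have hF : f - sr α • f = p * (q * Lam α f) := by rw [← hΛ, hpq, mul_assoc]
  have hpq0 : p * q ≠ 0 := mul_ne_zero hp0 hq0
  have iffA1 : ((1 - Ee (r α)) * p ^ (m - 1) ∣ f - sr α • f) ↔ p ^ (m - 1) ∣ Lam α f := by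
    rw [hpq, hF]
    constructor
    · rintro ⟨u, hu⟩
      refine ⟨u, ?_⟩
      apply mul_left_cancel₀ hpq0
      calc p * q * Lam α f = p * (q * Lam α f) := by ring
        _ = p * q * p ^ (m - 1) * u := hu
        _ = p * q * (p ^ (m - 1) * u) := by ring
    · rintro ⟨u, hu⟩
      exact ⟨u, by rw [hu]; ring⟩
  have iffA2 : (p ^ m ∣ f - sr α • f) ↔ p ^ (m - 1) ∣ Lam α f := by
    rw [hF]
    have hm' : p ^ m = p * p ^ (m - 1) := by
      conv_lhs => rw [show m = (m - 1) + 1 by omega]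
      rw [pow_succ, mul_comm]
    rw [hm', mul_dvd_mul_iff_left hp0]
    constructor
    · intro h
      rcases hq_cases with hq1 | hq1
      · rwa [hq1, one_mul] at h
      · rw [hq1] at h; exact hqcancel _ _ h
    · intro h; exact Dvd.dvd.mul_left h q
  have iffA3 : (p ^ (2 * (m / 2)) ∣ Lam α f) ↔ p ^ (m - 1) ∣ Lam α f := by
    rcases Nat.even_or_odd m with he | ho
    · have h2 : 2 * (m / 2) = m := by
        obtain ⟨j, hj⟩ := he; omega
      rw [h2]
      constructor
      · intro h; exact dvd_trans (pow_dvd_pow p (by omega)) h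
      · intro h
        have hodd : Odd (m - 1) := by
          obtain ⟨j, hj⟩ := he
          exact ⟨j - 1, by omega⟩
        have := hparity (m - 1) hodd h
        rwa [show m - 1 + 1 = m by omega] at this
    · have h2 : 2 * (m / 2) = m - 1 := by
        obtain ⟨j, hj⟩ := ho; omega
      rw [h2]
  exact ⟨iffA1.trans iffA2.symm, iffA2.trans iffA3.symm⟩

end Statement11
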